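/- In the forward-secure TBIDS reduction, the simulation condition is combinatorially sound: suppose the adversary's Update queries form a set Q^t ⊆ [n] and its forgery targets epoch i* with {1, …, i* − 1} ∩ Q^t = ∅ and (i* − 1, id*) not delegated. For each queried epoch i ∈ Q^t, the reduction queries the HIBS delegation oracle on binid(i) and on all right-sibling nodes along the path from leaf i to the root. Then none of these queried HIBS identities is a prefix of binid(i* − 1), hence the forgery remains valid for the HIBS. -/

import Mathlib

/-- The `d`-bit binary encoding (most significant bit first) of the index of a
leaf of the complete binary tree of depth `d`; nodes are binary strings of
length ≤ `d` with the root `[]`. -/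
def leafEnc (d i : ℕ) : List Bool := (List.range d).map fun j => i.testBit (d - 1 - j)

/-- Leaf `i` together with all right siblings of nodes on the path from leaf `i`
to the root: a node `w' ++ [false]` on the path has right sibling
`w' ++ [true]`.  These are exactly the HIBS identities the reduction queries for
an `Update` query at epoch `i`. -/
def coverSet (d i : ℕ) : Set (List Bool) :=
  {leafEnc d i} ∪
    {w | ∃ w' : List Bool, (w' ++ [false]) <+: leafEnc d i ∧ w = w' ++ [true]}

lemma leafEnc_length (d i : ℕ) : (leafEnc d i).length = d := by simp [leafEnc]

lemma leafEnc_get (d i j : ℕ) (hj : j < d) :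
    (leafEnc d i)[j]'(by simp [leafEnc_length, hj]) = i.testBit (d - 1 - j) := by
  simp [leafEnc]

lemma key (d a b : ℕ) (ha : a < 2^d) (hb : b < 2^d) (w' : List Bool)
    (hA : w' ++ [false] <+: leafEnc d a) (hB : w' ++ [true] <+: leafEnc d b) : a < b := by
  set m := w'.length
  have hm : m + 1 ≤ d := by
    have := hA.length_le
    simpa [leafEnc_length, m] using this
  have hAm : a.testBit (d - 1 - m) = false := by
    have h := hA.getElem (i := m) (by simp [m])
    rw [leafEnc_get d a m (by omega)] at h
    simpa [m] using h.symm
  have hBm : b.testBit (d - 1 - m) = true := by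
    have h := hB.getElem (i := m) (by simp [m])
    rw [leafEnc_get d b m (by omega)] at h
    simpa [m] using h.symm
  refine Nat.lt_of_testBit (d - 1 - m) hAm hBm ?_
  intro p hp
  by_cases hpd : p < d
  · have hj : d - 1 - p < m := by omega
    have hjd : d - 1 - p < d := by omega
    have hp' : d - 1 - (d - 1 - p) = p := by omega
    have hA' := hA.getElem (i := d - 1 - p) (by simp [m]; omega)
    have hB' := hB.getElem (i := d - 1 - p) (by simp [m]; omega)
    rw [leafEnc_get d a _ hjd, hp'] at hA'
    rw [leafEnc_get d b _ hjd, hp'] at hB'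
    rw [← hA', ← hB']
    rw [List.getElem_append_left (by exact hj), List.getElem_append_left (by exact hj)]
  · have : (2:ℕ)^d ≤ 2^p := Nat.pow_le_pow_right (by norm_num) (by omega)
    rw [Nat.testBit_lt_two_pow (by omega), Nat.testBit_lt_two_pow (by omega)]

lemma leafEnc_inj (d a b : ℕ) (ha : a < 2^d) (hb : b < 2^d)
    (h : leafEnc d a = leafEnc d b) : a = b := by
  apply Nat.eq_of_testBit_eq
  intro p
  by_cases hpd : p < d
  · have hjd : d - 1 - p < d := by omega
    have hp' : d - 1 - (d - 1 - p) = p := by omega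
    have hgl : d - 1 - p < (leafEnc d a).length := by simp [leafEnc_length]; omega
    have := List.getElem_of_eq h hgl
    rw [leafEnc_get d a _ hjd, leafEnc_get d b _ hjd, hp'] at this
    exact this
  · have : (2:ℕ)^d ≤ 2^p := Nat.pow_le_pow_right (by norm_num) (by omega)
    rw [Nat.testBit_lt_two_pow (by omega), Nat.testBit_lt_two_pow (by omega)]

/-- Combinatorial soundness of the forward-secure TBIDS reduction: if the
adversary's `Update` queries `Q^t` contain no epoch below the forgery target
`i*` (i.e. every queried epoch `i` satisfies `i* ≤ i`), then none of the HIBS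
identities queried by the reduction — for each `i ∈ Q^t`, the leaf `binid(i)`
and all right siblings on the path from leaf `i` to the root — is a prefix of
`binid(i* − 1)`, so the forgery remains valid for the HIBS. -/
theorem fs_tbids_reduction_sound (d : ℕ) (Qt : Set ℕ) (istar : ℕ)
    (h1 : 1 ≤ istar) (h2 : istar - 1 < 2 ^ d)
    (hQ : ∀ i ∈ Qt, i < 2 ^ d)
    (hfresh : ∀ i ∈ Qt, istar ≤ i) :
    ∀ i ∈ Qt, ∀ w ∈ coverSet d i, ¬ w <+: leafEnc d (istar - 1) := by
  intro i hi w hw hpre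
  rcases hw with hw | ⟨w', hw', rfl⟩
  · rcases hw with rfl
    have hlen : (leafEnc d i).length = (leafEnc d (istar-1)).length := by
      simp [leafEnc_length]
    have heq : leafEnc d i = leafEnc d (istar - 1) :=
      List.IsPrefix.eq_of_length hpre hlen
    have := leafEnc_inj d i (istar-1) (hQ i hi) h2 heq
    have := hfresh i hi
    omega
  · have := key d i (istar - 1) (hQ i hi) h2 w' hw' hpre
    have := hfresh i hi
    omega
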